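/- Let R > 0, let r ∈ ℝ with r ∉ ℤ, let θ ∈ ℝ, and let σ > 0. Then (R/(2√π)) · ∫₀^∞ t^{−3/2} · exp(−σ·t) · ( Σ_{n ∈ ℤ} exp(−R²(n−r)²/(4t)) · exp(−i·θ·(n−r)) ) dt = Σ_{n ∈ ℤ} (1/|n−r|) · exp(−R·|n−r|·√σ) · exp(−i·θ·(n−r)); in particular, all sums and the integral converge absolutely. -/

import Mathlib

open MeasureTheory Real Set

-- integrable tsum lemma
lemma my_integrable_tsum {α : Type*} [MeasurableSpace α] {μ : Measure α} {f : ℤ → α → ℂ}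
    (hf : ∀ i, Integrable (f i) μ) (h : Summable fun i => ∫ a, ‖f i a‖ ∂μ) :
    Integrable (fun a => ∑' i, f i a) μ := by
  have hf' : ∑' i, ∫⁻ a, ‖f i a‖₊ ∂μ ≠ ⊤ := by
    have heq : ∀ i, ∫⁻ a, ‖f i a‖₊ ∂μ = ENNReal.ofReal (∫ a, ‖f i a‖ ∂μ) := fun i =>
      (ofReal_integral_norm_eq_lintegral_enorm (hf i)).symm
    rw [funext heq, ← ENNReal.ofReal_tsum_of_nonneg
      (fun i => integral_nonneg fun a => norm_nonneg _) h]
    exact ENNReal.ofReal_ne_top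
  have hmeas : ∀ i, AEMeasurable (fun x => (‖f i x‖₊ : ENNReal)) μ := fun i => (hf i).1.enorm
  have hhh : ∀ᵐ a ∂μ, Summable fun n => ‖f n a‖ := by
    have hft : ∀ᵐ a ∂μ, ∑' i, (‖f i a‖₊ : ENNReal) < ⊤ :=
      ae_lt_top' (AEMeasurable.ennreal_tsum hmeas) (by rwa [lintegral_tsum hmeas])
    filter_upwards [hft] with a ha
    have := ENNReal.tsum_coe_ne_top_iff_summable_coe.mp ha.ne
    simpa [coe_nnnorm] using this
  have hsm : AEStronglyMeasurable (fun a => ∑' i, f i a) μ := by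
    refine aestronglyMeasurable_of_tendsto_ae (Filter.atTop : Filter (Finset ℤ))
      (fun s => Finset.aestronglyMeasurable_sum s fun i _ => (hf i).1) ?_
    filter_upwards [hhh] with a ha
    have h' : Filter.Tendsto (fun s : Finset ℤ => ∑ b ∈ s, f b a) Filter.atTop
        (nhds (∑' i, f i a)) := ha.of_norm.hasSum
    simpa only [Finset.sum_apply] using h'
  refine ⟨hsm, ?_⟩
  show (∫⁻ a, (‖∑' i, f i a‖₊ : ENNReal) ∂μ) < ⊤
  calc ∫⁻ a, (‖∑' i, f i a‖₊ : ENNReal) ∂μ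
      ≤ ∫⁻ a, ∑' i, (‖f i a‖₊ : ENNReal) ∂μ := by
        refine lintegral_mono_ae ?_
        filter_upwards [hhh] with a ha
        have h1 : ‖∑' i, f i a‖₊ ≤ ∑' i, ‖f i a‖₊ := by
          apply nnnorm_tsum_le
          rwa [← NNReal.summable_coe]
    -- coe mono
        exact le_trans (ENNReal.coe_le_coe.mpr h1) (by
          rw [ENNReal.coe_tsum]
          rwa [← NNReal.summable_coe])
    _ = ∑' i, ∫⁻ a, (‖f i a‖₊ : ENNReal) ∂μ := lintegral_tsum hmeas
    _ < ⊤ := hf'.lt_top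


lemma img_univ (c : ℝ) (hc : 0 < c) : (fun u : ℝ => u - c / u) '' Ioi 0 = univ := by
  ext v
  simp only [mem_image, mem_univ, iff_true, mem_Ioi]
  refine ⟨(v + Real.sqrt (v ^ 2 + 4 * c)) / 2, ?_, ?_⟩
  · have h1 : |v| < Real.sqrt (v ^ 2 + 4 * c) := by
      rw [← Real.sqrt_sq_eq_abs]
      exact Real.sqrt_lt_sqrt (sq_nonneg v) (by linarith)
    have := neg_abs_le v
    linarith [abs_nonneg v, h1]
  · have hs : Real.sqrt (v ^ 2 + 4 * c) ^ 2 = v ^ 2 + 4 * c := Real.sq_sqrt (by positivity)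
    have h1 : |v| < Real.sqrt (v ^ 2 + 4 * c) := by
      rw [← Real.sqrt_sq_eq_abs]
      exact Real.sqrt_lt_sqrt (sq_nonneg v) (by linarith)
    have hu : (v + Real.sqrt (v ^ 2 + 4 * c)) / 2 ≠ 0 := by
      have := neg_abs_le v; have := abs_nonneg v
      have : 0 < (v + Real.sqrt (v ^ 2 + 4 * c)) / 2 := by linarith
      exact ne_of_gt this
    have : c / ((v + Real.sqrt (v ^ 2 + 4 * c)) / 2) = (v + Real.sqrt (v ^ 2 + 4 * c)) / 2 - v := by
      rw [div_eq_iff hu]; nlinarith [hs]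
    rw [this]; ring

lemma inj_f (c : ℝ) (hc : 0 < c) : InjOn (fun u : ℝ => u - c / u) (Ioi 0) := by
  intro u hu w hw huw
  simp only [mem_Ioi] at hu hw
  simp only at huw
  have h3 : (u - w) * (u * w + c) = 0 := by
    field_simp at huw
    nlinarith [huw]
  rcases mul_eq_zero.mp h3 with h | h
  · linarith
  · nlinarith

lemma hderiv_f (c : ℝ) : ∀ u ∈ Ioi (0:ℝ),
    HasDerivWithinAt (fun u : ℝ => u - c / u) (1 + c / u ^ 2) (Ioi 0) u := by
  intro u hu
  have hu0 : u ≠ 0 := ne_of_gt hu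
  have h := ((hasDerivAt_id u).sub (((hasDerivAt_inv hu0).const_mul c)))
  have : 1 - c * (-(u ^ 2)⁻¹) = 1 + c / u ^ 2 := by field_simp; ring
  rw [← this]
  exact (h.congr_of_eventuallyEq (Filter.Eventually.of_forall fun v => by
    simp [div_eq_mul_inv])).hasDerivWithinAt

lemma exp_sq_identity (c u : ℝ) (hu : 0 < u) :
    (u - c / u) ^ 2 = u ^ 2 - 2 * c + (c / u) ^ 2 := by
  field_simp
  ring

lemma h_integrable (c : ℝ) (hc : 0 < c) :
    IntegrableOn (fun u : ℝ => Real.exp (-(u - c / u) ^ 2)) (Ioi 0) := by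
  have hmeas : AEStronglyMeasurable (fun u : ℝ => Real.exp (-(u - c / u) ^ 2))
      (volume.restrict (Ioi 0)) := by
    apply ContinuousOn.aestronglyMeasurable _ measurableSet_Ioi
    apply Real.continuous_exp.comp_continuousOn
    exact (((continuousOn_id.sub (continuousOn_const.div continuousOn_id
      fun u hu => ne_of_gt hu)).pow 2).neg)
  refine Integrable.mono' (g := fun u => Real.exp (2 * c) * Real.exp (-u ^ 2)) ?_ hmeas ?_
  · exact ((integrable_exp_neg_mul_sq one_pos).const_mul (Real.exp (2 * c))).restrict.congr
      (by filter_upwards with u using by rw [neg_one_mul])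
  · filter_upwards [ae_restrict_mem measurableSet_Ioi] with u hu
    rw [Real.norm_eq_abs, Real.abs_exp, ← Real.exp_add]
    apply Real.exp_le_exp.mpr
    have := exp_sq_identity c u hu
    nlinarith [sq_nonneg (c / u)]

lemma swap_integrand (c : ℝ) (hc : 0 < c) :
    ∫ u in Ioi (0:ℝ), (c / u ^ 2) * Real.exp (-(u - c / u) ^ 2)
      = ∫ u in Ioi (0:ℝ), Real.exp (-(u - c / u) ^ 2) := by
  have himg : (fun u : ℝ => c / u) '' Ioi 0 = Ioi 0 := by
    ext v
    simp only [mem_image, mem_Ioi]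
    constructor
    · rintro ⟨u, hu, rfl⟩; positivity
    · intro hv; exact ⟨c / v, by positivity, by field_simp⟩
  have hder : ∀ u ∈ Ioi (0:ℝ),
      HasDerivWithinAt (fun u : ℝ => c / u) (-(c / u ^ 2)) (Ioi 0) u := by
    intro u hu
    have hu0 : (u:ℝ) ≠ 0 := ne_of_gt hu
    have h := (hasDerivAt_inv hu0).const_mul c
    have : c * -(u ^ 2)⁻¹ = -(c / u ^ 2) := by field_simp
    simpa [this, div_eq_mul_inv] using h.hasDerivWithinAt
  have hinj : InjOn (fun u : ℝ => c / u) (Ioi 0) := by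
    intro u hu w hw huw
    simp only [mem_Ioi] at hu hw
    simp only at huw
    field_simp at huw
    linarith
  have := integral_image_eq_integral_abs_deriv_smul measurableSet_Ioi hder hinj
    (fun x => Real.exp (-(x - c / x) ^ 2))
  rw [himg] at this
  rw [this]
  apply setIntegral_congr_fun measurableSet_Ioi
  intro u hu
  simp only [mem_Ioi] at hu
  have hu0 : u ≠ 0 := ne_of_gt hu
  simp only [smul_eq_mul, abs_neg, abs_of_pos (by positivity : (0:ℝ) < c / u ^ 2)]
  congr 1
  have h5 : c / (c / u) = u := by field_simp
  rw [h5]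
  ring_nf

lemma glasser (c : ℝ) (hc : 0 < c) :
    ∫ u in Ioi (0:ℝ), Real.exp (-(u - c / u) ^ 2) = Real.sqrt π / 2 := by
  have key := integral_image_eq_integral_abs_deriv_smul measurableSet_Ioi (hderiv_f c)
    (inj_f c hc) (fun x => Real.exp (-x ^ 2))
  rw [img_univ c hc] at key
  have lhs : ∫ x in (univ : Set ℝ), Real.exp (-x ^ 2) = Real.sqrt π := by
    rw [setIntegral_univ]
    simpa using integral_gaussian 1
  -- integrability of the pieces
  have h1 : IntegrableOn (fun u : ℝ => Real.exp (-(u - c / u) ^ 2)) (Ioi 0) :=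
    h_integrable c hc
  have h2 : IntegrableOn (fun u : ℝ => (c / u ^ 2) * Real.exp (-(u - c / u) ^ 2)) (Ioi 0) := by
    have himg : (fun u : ℝ => c / u) '' Ioi 0 = Ioi 0 := by
      ext v
      simp only [mem_image, mem_Ioi]
      constructor
      · rintro ⟨u, hu, rfl⟩; positivity
      · intro hv; exact ⟨c / v, by positivity, by field_simp⟩
    have hder : ∀ u ∈ Ioi (0:ℝ),
        HasDerivWithinAt (fun u : ℝ => c / u) (-(c / u ^ 2)) (Ioi 0) u := by
      intro u hu
      have hu0 : (u:ℝ) ≠ 0 := ne_of_gt hu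
      have h := (hasDerivAt_inv hu0).const_mul c
      have : c * -(u ^ 2)⁻¹ = -(c / u ^ 2) := by field_simp
      simpa [this, div_eq_mul_inv] using h.hasDerivWithinAt
    have hinj : InjOn (fun u : ℝ => c / u) (Ioi 0) := by
      intro u hu w hw huw
      simp only [mem_Ioi] at hu hw
      simp only at huw
      field_simp at huw
      linarith
    have hiff := integrableOn_image_iff_integrableOn_abs_deriv_smul measurableSet_Ioi hder hinj
      (fun x => Real.exp (-(x - c / x) ^ 2))
    rw [himg] at hiff
    have h3 := hiff.mp (h_integrable c hc)
    apply h3.congr_fun _ measurableSet_Ioi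
    intro u hu
    simp only [mem_Ioi] at hu
    have hu0 : u ≠ 0 := ne_of_gt hu
    simp only [smul_eq_mul, abs_neg, abs_of_pos (by positivity : (0:ℝ) < c / u ^ 2)]
    congr 1
    have h5 : c / (c / u) = u := by field_simp
    rw [h5]
    ring_nf
  have split : ∫ u in Ioi (0:ℝ), |1 + c / u ^ 2| • Real.exp (-(u - c / u) ^ 2)
      = (∫ u in Ioi (0:ℝ), Real.exp (-(u - c / u) ^ 2))
        + ∫ u in Ioi (0:ℝ), (c / u ^ 2) * Real.exp (-(u - c / u) ^ 2) := by
    rw [← integral_add h1 h2]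
    apply setIntegral_congr_fun measurableSet_Ioi
    intro u hu
    simp only [mem_Ioi] at hu
    simp only [smul_eq_mul, abs_of_pos (by positivity : (0:ℝ) < 1 + c / u ^ 2)]
    ring
  rw [key, split, swap_integrand c hc] at lhs
  linarith

lemma Jlem_integrand_eq (c : ℝ) (hc : 0 < c) : ∀ u ∈ Ioi (0:ℝ),
    Real.exp (-(u ^ 2 + c ^ 2 / u ^ 2)) = Real.exp (-(2 * c)) * Real.exp (-(u - c / u) ^ 2) := by
  intro u hu
  simp only [mem_Ioi] at hu
  rw [← Real.exp_add]
  congr 1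
  have hu0 : u ≠ 0 := ne_of_gt hu
  field_simp
  ring

lemma Jlem (c : ℝ) (hc : 0 < c) :
    ∫ u in Ioi (0:ℝ), Real.exp (-(u ^ 2 + c ^ 2 / u ^ 2))
      = Real.sqrt π / 2 * Real.exp (-(2 * c)) := by
  rw [setIntegral_congr_fun measurableSet_Ioi (Jlem_integrand_eq c hc), MeasureTheory.integral_const_mul,
    glasser c hc]
  ring

lemma Jlem_integrable (c : ℝ) (hc : 0 < c) :
    IntegrableOn (fun u : ℝ => Real.exp (-(u ^ 2 + c ^ 2 / u ^ 2))) (Ioi 0) := by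
  have h0 : IntegrableOn (fun u : ℝ => Real.exp (-(2 * c)) * Real.exp (-(u - c / u) ^ 2))
      (Ioi 0) := (h_integrable c hc).const_mul _
  exact h0.congr_fun (fun u hu => (Jlem_integrand_eq c hc u hu).symm) measurableSet_Ioi

section KeyLemma

variable (a b : ℝ)

lemma phi_img (ha : 0 < a) : (fun u : ℝ => a ^ 2 / (4 * u ^ 2)) '' Ioi 0 = Ioi 0 := by
  ext t
  simp only [mem_image, mem_Ioi]
  constructor
  · rintro ⟨u, hu, rfl⟩; positivity
  · intro ht
    refine ⟨a / (2 * Real.sqrt t), by positivity, ?_⟩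
    have hs : Real.sqrt t ^ 2 = t := Real.sq_sqrt ht.le
    have hs0 : Real.sqrt t ≠ 0 := by positivity
    field_simp
    nlinarith [hs]

lemma phi_deriv (ha : 0 < a) : ∀ u ∈ Ioi (0:ℝ),
    HasDerivWithinAt (fun u : ℝ => a ^ 2 / (4 * u ^ 2)) (-(a ^ 2 / 2 / u ^ 3)) (Ioi 0) u := by
  intro u hu
  simp only [mem_Ioi] at hu
  have hu0 : u ≠ 0 := ne_of_gt hu
  have h1 : HasDerivAt (fun u : ℝ => u ^ 2) (2 * u) u := by
    simpa using hasDerivAt_pow 2 u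
  have h2 := (h1.inv (by positivity)).const_mul (a ^ 2 / 4)
  have h3 : a ^ 2 / 4 * (-(2 * u) / (u ^ 2) ^ 2) = -(a ^ 2 / 2 / u ^ 3) := by
    field_simp; ring
  have h4 : ∀ v : ℝ, a ^ 2 / 4 * (v ^ 2)⁻¹ = a ^ 2 / (4 * v ^ 2) := by
    intro v
    rcases eq_or_ne v 0 with rfl | hv
    · simp
    · field_simp
  rw [h3] at h2
  exact (h2.congr_of_eventuallyEq (Filter.Eventually.of_forall fun v => (h4 v).symm)).hasDerivWithinAt

lemma phi_inj (ha : 0 < a) : InjOn (fun u : ℝ => a ^ 2 / (4 * u ^ 2)) (Ioi 0) := by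
  intro u hu w hw huw
  simp only [mem_Ioi] at hu hw
  simp only at huw
  have hu0 : u ≠ 0 := ne_of_gt hu
  have hw0 : w ≠ 0 := ne_of_gt hw
  have ha0 : a ≠ 0 := ne_of_gt ha
  field_simp at huw
  nlinarith [huw]

lemma phi_pointwise (ha : 0 < a) (hb : 0 < b) : ∀ u ∈ Ioi (0:ℝ),
    |(-(a ^ 2 / 2 / u ^ 3))| • ((fun t : ℝ => t ^ (-(3:ℝ)/2) * Real.exp (-b * t) *
        Real.exp (-a ^ 2 / (4 * t))) (a ^ 2 / (4 * u ^ 2)))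
      = (4 / a) * Real.exp (-(u ^ 2 + (a * Real.sqrt b / 2) ^ 2 / u ^ 2)) := by
  intro u hu
  simp only [mem_Ioi] at hu
  have hu0 : u ≠ 0 := ne_of_gt hu
  have ha0 : a ≠ 0 := ne_of_gt ha
  have hy : (0:ℝ) < a / (2 * u) := by positivity
  have hφ : a ^ 2 / (4 * u ^ 2) = (a / (2 * u)) ^ 2 := by
    field_simp; ring
  have hrpow : (a ^ 2 / (4 * u ^ 2)) ^ (-(3:ℝ)/2) = ((a / (2 * u)) ^ 3)⁻¹ := by
    rw [hφ, ← Real.rpow_natCast (a / (2 * u)) 2, ← Real.rpow_mul hy.le]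
    rw [show ((2:ℕ):ℝ) * (-(3:ℝ)/2) = ((-3 : ℤ) : ℝ) by norm_num, Real.rpow_intCast]
    rw [zpow_neg, zpow_ofNat]
  have hsb : Real.sqrt b ^ 2 = b := Real.sq_sqrt hb.le
  have he1 : -b * (a ^ 2 / (4 * u ^ 2)) = -((a * Real.sqrt b / 2) ^ 2 / u ^ 2) := by
    field_simp
    linear_combination 4 * hsb
  have he2 : -a ^ 2 / (4 * (a ^ 2 / (4 * u ^ 2))) = -u ^ 2 := by
    field_simp
  simp only [smul_eq_mul]
  rw [hrpow, he1, he2, abs_neg, abs_of_pos (by positivity : (0:ℝ) < a ^ 2 / 2 / u ^ 3)]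
  rw [show -(u ^ 2 + (a * Real.sqrt b / 2) ^ 2 / u ^ 2)
      = -((a * Real.sqrt b / 2) ^ 2 / u ^ 2) + -u ^ 2 by ring, Real.exp_add]
  have hcoef : a ^ 2 / 2 / u ^ 3 * ((a / (2 * u)) ^ 3)⁻¹ = 4 / a := by
    field_simp; ring
  linear_combination (Real.exp (-((a * Real.sqrt b / 2) ^ 2 / u ^ 2)) * Real.exp (-u ^ 2)) * hcoef

lemma key_integral (ha : 0 < a) (hb : 0 < b) :
    ∫ t in Ioi (0:ℝ), t ^ (-(3:ℝ)/2) * Real.exp (-b * t) * Real.exp (-a ^ 2 / (4 * t))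
      = 2 * Real.sqrt π / a * Real.exp (-(a * Real.sqrt b)) := by
  have hc : 0 < a * Real.sqrt b / 2 := by positivity
  have key := integral_image_eq_integral_abs_deriv_smul measurableSet_Ioi (phi_deriv a ha)
    (phi_inj a ha) (fun t : ℝ => t ^ (-(3:ℝ)/2) * Real.exp (-b * t) * Real.exp (-a ^ 2 / (4 * t)))
  rw [phi_img a ha] at key
  rw [key, setIntegral_congr_fun measurableSet_Ioi (phi_pointwise a b ha hb),
    MeasureTheory.integral_const_mul, Jlem _ hc]
  rw [show 2 * (a * Real.sqrt b / 2) = a * Real.sqrt b by ring]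
  field_simp
  ring

lemma key_integrable (ha : 0 < a) (hb : 0 < b) :
    IntegrableOn (fun t : ℝ => t ^ (-(3:ℝ)/2) * Real.exp (-b * t) *
      Real.exp (-a ^ 2 / (4 * t))) (Ioi 0) := by
  have hc : 0 < a * Real.sqrt b / 2 := by positivity
  have hiff := integrableOn_image_iff_integrableOn_abs_deriv_smul measurableSet_Ioi
    (phi_deriv a ha) (phi_inj a ha)
    (fun t : ℝ => t ^ (-(3:ℝ)/2) * Real.exp (-b * t) * Real.exp (-a ^ 2 / (4 * t)))
  rw [phi_img a ha] at hiff
  rw [hiff]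
  have h0 : IntegrableOn (fun u : ℝ => (4 / a) *
      Real.exp (-(u ^ 2 + (a * Real.sqrt b / 2) ^ 2 / u ^ 2))) (Ioi 0) :=
    (Jlem_integrable _ hc).const_mul _
  exact h0.congr_fun (fun u hu => (phi_pointwise a b ha hb u hu).symm) measurableSet_Ioi

end KeyLemma

lemma sum_exp_abs_int (c : ℝ) (hc : 0 < c) :
    Summable fun n : ℤ => Real.exp (-c * |(n : ℝ)|) := by
  have hgeo : Summable fun n : ℕ => Real.exp (-c) ^ n :=
    summable_geometric_of_lt_one (Real.exp_pos _).le
      (Real.exp_lt_one_iff.mpr (by linarith))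
  have hnat : Summable fun n : ℕ => Real.exp (-c * n) := by
    refine hgeo.congr fun n => ?_
    rw [← Real.exp_nat_mul]; ring_nf
  apply Summable.of_nat_of_neg
  · refine hnat.congr fun n => ?_
    simp [abs_of_nonneg (by positivity : (0:ℝ) ≤ (n:ℝ))]
  · refine hnat.congr fun n => ?_
    push_cast
    rw [abs_neg, abs_of_nonneg (by positivity : (0:ℝ) ≤ (n:ℝ))]

lemma sum_exp_shift (c r : ℝ) (hc : 0 < c) :
    Summable fun n : ℤ => Real.exp (-c * |(n : ℝ) - r|) := by
  refine Summable.of_nonneg_of_le (fun n => (Real.exp_pos _).le) (fun n => ?_)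
    ((sum_exp_abs_int c hc).mul_left (Real.exp (c * |r|)))
  rw [← Real.exp_add]
  apply Real.exp_le_exp.mpr
  have h1 : |(n : ℝ)| - |r| ≤ |(n : ℝ) - r| := abs_sub_abs_le_abs_sub _ _
  nlinarith [abs_nonneg r, abs_nonneg ((n:ℝ) - r)]


theorem stmt_11 (R r θ σ : ℝ) (hR : 0 < R) (hr : ∀ m : ℤ, r ≠ (m : ℝ)) (hσ : 0 < σ) :
    (∀ t : ℝ, 0 < t → Summable fun n : ℤ =>
      ((Real.exp (-(R ^ 2 * ((n : ℝ) - r) ^ 2) / (4 * t)) : ℝ) : ℂ) *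
        Complex.exp (-(Complex.I * (θ : ℂ) * (((n : ℝ) - r : ℝ) : ℂ)))) ∧
    IntegrableOn (fun t : ℝ => ((t ^ (-(3:ℝ)/2) * Real.exp (-σ * t) : ℝ) : ℂ) *
      ∑' n : ℤ, ((Real.exp (-(R ^ 2 * ((n : ℝ) - r) ^ 2) / (4 * t)) : ℝ) : ℂ) *
        Complex.exp (-(Complex.I * (θ : ℂ) * (((n : ℝ) - r : ℝ) : ℂ)))) (Ioi 0) volume ∧
    Summable (fun n : ℤ =>
      ((1 / |(n : ℝ) - r| * Real.exp (-R * |(n : ℝ) - r| * Real.sqrt σ) : ℝ) : ℂ) *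
        Complex.exp (-(Complex.I * (θ : ℂ) * (((n : ℝ) - r : ℝ) : ℂ)))) ∧
    ((R / (2 * Real.sqrt π) : ℝ) : ℂ) *
        ∫ t in Ioi (0:ℝ), ((t ^ (-(3:ℝ)/2) * Real.exp (-σ * t) : ℝ) : ℂ) *
          ∑' n : ℤ, ((Real.exp (-(R ^ 2 * ((n : ℝ) - r) ^ 2) / (4 * t)) : ℝ) : ℂ) *
            Complex.exp (-(Complex.I * (θ : ℂ) * (((n : ℝ) - r : ℝ) : ℂ)))
      = ∑' n : ℤ,
          ((1 / |(n : ℝ) - r| * Real.exp (-R * |(n : ℝ) - r| * Real.sqrt σ) : ℝ) : ℂ) *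
            Complex.exp (-(Complex.I * (θ : ℂ) * (((n : ℝ) - r : ℝ) : ℂ))) := by
  have hπ : (0:ℝ) < Real.sqrt π := Real.sqrt_pos.mpr Real.pi_pos
  have hσs : (0:ℝ) < Real.sqrt σ := Real.sqrt_pos.mpr hσ
  have haN : ∀ n : ℤ, 0 < |(n:ℝ) - r| := by
    intro n
    apply abs_pos.mpr
    intro h
    exact hr n (by linarith [sub_eq_zero.mp h])
  -- uniform lower bound
  obtain ⟨δ, hδ0, hδ⟩ : ∃ δ > 0, ∀ n : ℤ, δ ≤ |(n:ℝ) - r| := by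
    have hfr : 0 < Int.fract r := by
      rw [Int.fract_pos]
      exact fun h => hr ⌊r⌋ h
    have hfr1 : Int.fract r < 1 := Int.fract_lt_one r
    refine ⟨min (Int.fract r) (1 - Int.fract r), lt_min hfr (by linarith), fun n => ?_⟩
    have hfloor : (⌊r⌋ : ℝ) = r - Int.fract r := by
      rw [← Int.self_sub_floor]; ring
    rcases le_or_gt n ⌊r⌋ with h | h
    · have h1 : (n:ℝ) ≤ ⌊r⌋ := by exact_mod_cast h
      rw [abs_of_nonpos (by rw [hfloor] at h1; linarith)]
      rw [hfloor] at h1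
      calc min (Int.fract r) (1 - Int.fract r) ≤ Int.fract r := min_le_left _ _
        _ ≤ -((n:ℝ) - r) := by linarith
    · have h1 : ((⌊r⌋:ℤ) + 1 : ℝ) ≤ n := by exact_mod_cast Int.add_one_le_iff.mpr h
      push_cast at h1
      rw [hfloor] at h1
      rw [abs_of_nonneg (by linarith)]
      calc min (Int.fract r) (1 - Int.fract r) ≤ 1 - Int.fract r := min_le_right _ _
        _ ≤ (n:ℝ) - r := by linarith
  set E : ℤ → ℂ := fun n => Complex.exp (-(Complex.I * (θ:ℂ) * (((n:ℝ) - r : ℝ) : ℂ))) with hE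
  have hEnorm : ∀ n : ℤ, ‖E n‖ = 1 := by
    intro n
    rw [hE]
    simp only [Complex.norm_exp]
    norm_num [Complex.mul_re, Complex.mul_im]
  -- Part 1
  have part1 : ∀ t : ℝ, 0 < t → Summable fun n : ℤ =>
      ((Real.exp (-(R ^ 2 * ((n : ℝ) - r) ^ 2) / (4 * t)) : ℝ) : ℂ) * E n := by
    intro t ht
    set k := R ^ 2 / (4 * t) with hk
    have hk0 : 0 < k := by positivity
    apply Summable.of_norm_bounded
      (g := fun n : ℤ => Real.exp k * Real.exp (-(2 * k) * |(n:ℝ) - r|))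
      ((sum_exp_shift (2 * k) r (by linarith)).mul_left _)
    intro n
    rw [norm_mul, hEnorm n, mul_one, Complex.norm_real, Real.norm_eq_abs, Real.abs_exp,
      ← Real.exp_add]
    apply Real.exp_le_exp.mpr
    have h2 : ((n:ℝ) - r) ^ 2 = |(n:ℝ) - r| ^ 2 := (sq_abs _).symm
    have h3 : -(R ^ 2 * ((n:ℝ) - r) ^ 2) / (4 * t) = -(k * |(n:ℝ) - r| ^ 2) := by
      rw [hk, ← h2]; ring
    rw [h3]
    nlinarith [sq_nonneg (|(n:ℝ) - r| - 1), hk0, abs_nonneg ((n:ℝ) - r)]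
  -- definitions
  set G : ℤ → ℝ → ℝ := fun n t => t ^ (-(3:ℝ)/2) * Real.exp (-σ * t) *
    Real.exp (-(R ^ 2 * ((n:ℝ) - r) ^ 2) / (4 * t)) with hG
  set F : ℤ → ℝ → ℂ := fun n t => ((G n t : ℝ) : ℂ) * E n with hF
  set I : ℤ → ℝ := fun n => 2 * Real.sqrt π / (R * |(n:ℝ) - r|) *
    Real.exp (-R * |(n:ℝ) - r| * Real.sqrt σ) with hI
  have hax : ∀ n : ℤ, (R * |(n:ℝ) - r|) ^ 2 = R ^ 2 * ((n:ℝ) - r) ^ 2 := by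
    intro n; rw [mul_pow, sq_abs]
  have hGint : ∀ n : ℤ, IntegrableOn (G n) (Ioi 0) := by
    intro n
    have h0 := key_integrable (R * |(n:ℝ) - r|) σ (mul_pos hR (haN n)) hσ
    simp only [hax n] at h0
    exact h0
  have hGval : ∀ n : ℤ, ∫ t in Ioi (0:ℝ), G n t = I n := by
    intro n
    have h0 := key_integral (R * |(n:ℝ) - r|) σ (mul_pos hR (haN n)) hσ
    simp only [hax n] at h0
    show (∫ t in Ioi (0:ℝ), t ^ (-(3:ℝ)/2) * Real.exp (-σ * t) *
        Real.exp (-(R ^ 2 * ((n:ℝ) - r) ^ 2) / (4 * t)))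
      = 2 * Real.sqrt π / (R * |(n:ℝ) - r|) * Real.exp (-R * |(n:ℝ) - r| * Real.sqrt σ)
    rw [h0]
    congr 1
    congr 1
    ring
  have hFint : ∀ n : ℤ, Integrable (F n) (volume.restrict (Ioi 0)) := fun n =>
    ((hGint n).ofReal).mul_const (E n)
  have hGnonneg : ∀ n : ℤ, ∀ t ∈ Ioi (0:ℝ), 0 ≤ G n t := by
    intro n t ht
    simp only [mem_Ioi] at ht
    rw [hG]
    have := Real.rpow_nonneg ht.le (-(3:ℝ)/2)
    positivity
  have hFnorm : ∀ n : ℤ, ∫ t in Ioi (0:ℝ), ‖F n t‖ = I n := by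
    intro n
    rw [← hGval n]
    apply setIntegral_congr_fun measurableSet_Ioi
    intro t ht
    rw [hF]
    simp only [norm_mul, hEnorm n, mul_one, Complex.norm_real, Real.norm_eq_abs]
    exact abs_of_nonneg (hGnonneg n t ht)
  have hIsum : Summable I := by
    rw [hI]
    apply Summable.of_nonneg_of_le
      (fun (n : ℤ) => show (0:ℝ) ≤ 2 * Real.sqrt π / (R * |(n:ℝ) - r|) *
        Real.exp (-R * |(n:ℝ) - r| * Real.sqrt σ) by positivity)
      (fun n => ?_)
      ((sum_exp_shift (R * Real.sqrt σ) r (by positivity)).mul_left (2 * Real.sqrt π / (R * δ)))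
    have h1 : 2 * Real.sqrt π / (R * |(n:ℝ) - r|) ≤ 2 * Real.sqrt π / (R * δ) := by
      apply div_le_div_of_nonneg_left (by positivity) (by positivity)
      exact mul_le_mul_of_nonneg_left (hδ n) hR.le
    have h2 : Real.exp (-R * |(n:ℝ) - r| * Real.sqrt σ)
        = Real.exp (-(R * Real.sqrt σ) * |(n:ℝ) - r|) := by congr 1; ring
    show 2 * Real.sqrt π / (R * |(n:ℝ) - r|) *
        Real.exp (-R * |(n:ℝ) - r| * Real.sqrt σ) ≤ _
    rw [h2]
    exact mul_le_mul_of_nonneg_right h1 (Real.exp_pos _).le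
  have hSnorm : Summable fun n : ℤ => ∫ t in Ioi (0:ℝ), ‖F n t‖ :=
    hIsum.congr fun n => (hFnorm n).symm
  -- function equality
  have hfun : (fun t : ℝ => ((t ^ (-(3:ℝ)/2) * Real.exp (-σ * t) : ℝ) : ℂ) *
      ∑' n : ℤ, ((Real.exp (-(R ^ 2 * ((n : ℝ) - r) ^ 2) / (4 * t)) : ℝ) : ℂ) * E n)
      = fun t : ℝ => ∑' n : ℤ, F n t := by
    funext t
    rw [← tsum_mul_left]
    apply tsum_congr
    intro n
    rw [hF, hG]
    push_cast
    ring
  refine ⟨part1, ?_, ?_, ?_⟩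
  · -- integrability
    rw [hfun]
    exact my_integrable_tsum hFint hSnorm
  · -- summability of result
    apply Summable.of_norm_bounded
      (g := fun n : ℤ => (1/δ) * Real.exp (-(R * Real.sqrt σ) * |(n:ℝ) - r|))
      (((sum_exp_shift (R * Real.sqrt σ) r (by positivity)).mul_left (1/δ)))
    intro n
    rw [norm_mul, hEnorm n, mul_one, Complex.norm_real, Real.norm_eq_abs]
    have hnn : (0:ℝ) ≤ 1 / |(n:ℝ) - r| * Real.exp (-R * |(n:ℝ) - r| * Real.sqrt σ) := by
      positivity
    rw [abs_of_nonneg hnn]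
    have h2 : Real.exp (-R * |(n:ℝ) - r| * Real.sqrt σ)
        = Real.exp (-(R * Real.sqrt σ) * |(n:ℝ) - r|) := by ring_nf
    rw [h2]
    apply mul_le_mul_of_nonneg_right _ (Real.exp_pos _).le
    exact one_div_le_one_div_of_le hδ0 (hδ n)
  · -- the main identity
    rw [hfun, ← integral_tsum_of_summable_integral_norm hFint hSnorm, ← tsum_mul_left]
    apply tsum_congr
    intro n
    have hintF : ∫ t in Ioi (0:ℝ), F n t = ((I n : ℝ) : ℂ) * E n := by
      rw [hF]
      rw [MeasureTheory.integral_mul_const,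
        show (∫ a in Ioi (0:ℝ), ((G n a : ℝ) : ℂ)) = ((∫ a in Ioi (0:ℝ), G n a : ℝ) : ℂ)
          from integral_ofReal, hGval n]
    rw [hintF, ← mul_assoc, ← Complex.ofReal_mul]
    congr 2
    rw [hI]
    have hne : |(n:ℝ) - r| ≠ 0 := ne_of_gt (haN n)
    field_simp
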